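/- Let U ⊆ ℝ³ be open, F : U → ℝ twice continuously differentiable, and λ : U → ℝ differentiable with F_a + F_b·λ + F_c·λ² = 0 identically on U. Let p ∈ U satisfy F(p) = 0 and F_b(p) + 2·F_c(p)·λ(p) ≠ 0, and suppose the characteristic through p is strong near p: there is ε > 0 such that for all |t| < ε the point p + t·(1, λ(p), λ(p)²) lies in U and F(p + t·(1, λ(p), λ(p)²)) = 0. Then the complete exceptionality condition holds at p: (λ_a + λ·λ_b + λ²·λ_c)(p) = 0. -/

import Mathlib

/-- The partial derivative of `G : ℝ³ → ℝ` in the constant direction `v`. -/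
noncomputable def pd (v : ℝ × ℝ × ℝ) (G : ℝ × ℝ × ℝ → ℝ) : ℝ × ℝ × ℝ → ℝ :=
  fun p => fderiv ℝ G p v

/-- Direction of the variable `a`. -/
def ea : ℝ × ℝ × ℝ := (1, 0, 0)
/-- Direction of the variable `b`. -/
def eb : ℝ × ℝ × ℝ := (0, 1, 0)
/-- Direction of the variable `c`. -/
def ec : ℝ × ℝ × ℝ := (0, 0, 1)

/-- If the characteristic of `F` through `p` determined by the characteristic
speed `λ` is strong near `p` (the characteristic line lies in `{F = 0}` for
small `t`), and `F_b(p) + 2 F_c(p) λ(p) ≠ 0`, then Lax's complete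
exceptionality condition holds at `p`. -/
theorem strong_characteristic_implies_lax_condition
    (U : Set (ℝ × ℝ × ℝ)) (hU : IsOpen U)
    (F lam : ℝ × ℝ × ℝ → ℝ)
    (hF : ContDiffOn ℝ 2 F U) (hlam : DifferentiableOn ℝ lam U)
    (hchar : ∀ q ∈ U, pd ea F q + pd eb F q * lam q + pd ec F q * lam q ^ 2 = 0)
    (p : ℝ × ℝ × ℝ) (hp : p ∈ U) (hF0 : F p = 0)
    (hnd : pd eb F p + 2 * pd ec F p * lam p ≠ 0)
    (hstrong : ∃ ε > (0 : ℝ), ∀ t : ℝ, |t| < ε →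
      p + t • ((1 : ℝ), lam p, lam p ^ 2) ∈ U ∧
      F (p + t • ((1 : ℝ), lam p, lam p ^ 2)) = 0) :
    pd ea lam p + lam p * pd eb lam p + lam p ^ 2 * pd ec lam p = 0 := by
  obtain ⟨ε, hε, hstr⟩ := hstrong
  set v : ℝ × ℝ × ℝ := ((1 : ℝ), lam p, lam p ^ 2) with hv
  -- basic differentiability facts
  have hUF : ∀ q ∈ U, DifferentiableAt ℝ F q := fun q hq =>
    (hF.contDiffAt (hU.mem_nhds hq)).differentiableAt two_ne_zero
  have hF' : ContDiffOn ℝ 1 (fun q => fderiv ℝ F q) U :=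
    hF.fderiv_of_isOpen hU (by norm_num)
  have hD2 : DifferentiableAt ℝ (fun q => fderiv ℝ F q) p :=
    (hF'.contDiffAt (hU.mem_nhds hp)).differentiableAt one_ne_zero
  set f'' := fderiv ℝ (fun q => fderiv ℝ F q) p with hf''
  have hlamp : DifferentiableAt ℝ lam p := hlam.differentiableAt (hU.mem_nhds hp)
  set L := fderiv ℝ lam p v with hL
  have h0 : p + (0 : ℝ) • v = p := by simp
  -- the line through p with direction v
  have hline : ∀ t : ℝ, HasDerivAt (fun s : ℝ => p + s • v) v t := fun t => by
    simpa using ((hasDerivAt_id t).smul_const v).const_add p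
  -- derivative of fderiv F along the line
  have hφ : HasDerivAt (fun t : ℝ => fderiv ℝ F (p + t • v)) (f'' v) 0 := by
    have h := hD2.hasFDerivAt
    rw [← h0] at h
    have h2 := h.comp_hasDerivAt 0 (hline 0)
    simpa [Function.comp_def, h0] using h2
  have happ : ∀ w : ℝ × ℝ × ℝ,
      HasDerivAt (fun t : ℝ => fderiv ℝ F (p + t • v) w) (f'' v w) 0 := fun w => by
    simpa using hφ.clm_apply (hasDerivAt_const 0 w)
  -- derivative of lam along the line
  have hlamline : HasDerivAt (fun t : ℝ => lam (p + t • v)) L 0 := by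
    have h := hlamp.hasFDerivAt
    rw [← h0] at h
    have h2 := h.comp_hasDerivAt 0 (hline 0)
    simpa [Function.comp_def, h0] using h2
  -- Step A : f'' v v = 0
  have hψ0 : ∀ t : ℝ, |t| < ε → fderiv ℝ F (p + t • v) v = 0 := by
    intro t ht
    have hq : p + t • v ∈ U := (hstr t ht).1
    have hg : HasDerivAt (fun s : ℝ => F (p + s • v)) (fderiv ℝ F (p + t • v) v) t := by
      have h2 := (hUF _ hq).hasFDerivAt.comp_hasDerivAt t (hline t)
      simpa [Function.comp_def] using h2
    have hzero : (fun s : ℝ => F (p + s • v)) =ᶠ[nhds t] fun _ => (0 : ℝ) := by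
      have hmem : Metric.ball t (ε - |t|) ∈ nhds t :=
        Metric.ball_mem_nhds t (by linarith)
      filter_upwards [hmem] with s hs
      have habs : |s| < ε := by
        have h3 := abs_sub_abs_le_abs_sub s t
        simp only [Metric.mem_ball, Real.dist_eq] at hs
        linarith
      exact (hstr s habs).2
    have hg0 : HasDerivAt (fun s : ℝ => F (p + s • v)) 0 t :=
      (hasDerivAt_const t (0 : ℝ)).congr_of_eventuallyEq hzero
    exact hg.unique hg0
  have hA : f'' v v = 0 := by
    have h1 : HasDerivAt (fun t : ℝ => fderiv ℝ F (p + t • v) v) (f'' v v) 0 := happ v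
    have hzero : (fun t : ℝ => fderiv ℝ F (p + t • v) v) =ᶠ[nhds (0 : ℝ)]
        fun _ => (0 : ℝ) := by
      filter_upwards [Metric.ball_mem_nhds (0 : ℝ) hε] with t ht
      exact hψ0 t (by simpa [Real.dist_eq] using ht)
    exact h1.unique ((hasDerivAt_const 0 (0 : ℝ)).congr_of_eventuallyEq hzero)
  -- decomposition of v
  have hvsum : ea + lam p • eb + lam p ^ 2 • ec = v := by
    simp [ea, eb, ec, hv, Prod.ext_iff]
  -- Step B : differentiate the characteristic identity along the line
  have hχraw := (happ ea).add (((happ eb).mul hlamline).add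
    ((happ ec).mul (hlamline.pow 2)))
  have hχzero : (fun t : ℝ =>
      fderiv ℝ F (p + t • v) ea + (fderiv ℝ F (p + t • v) eb * lam (p + t • v)
        + fderiv ℝ F (p + t • v) ec * lam (p + t • v) ^ 2)) =ᶠ[nhds (0 : ℝ)]
      fun _ => (0 : ℝ) := by
    filter_upwards [Metric.ball_mem_nhds (0 : ℝ) hε] with t ht
    have hq : p + t • v ∈ U := (hstr t (by simpa [Real.dist_eq] using ht)).1
    have h4 := hchar _ hq
    simp only [pd] at h4
    linarith
  have hB := hχraw.unique ((hasDerivAt_const 0 (0 : ℝ)).congr_of_eventuallyEq hχzero)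
  simp only [h0, Pi.pow_apply] at hB
  -- combine
  have hcomb : f'' v ea + f'' v eb * lam p + f'' v ec * lam p ^ 2 = 0 := by
    have h5 : f'' v (ea + lam p • eb + lam p ^ 2 • ec) = f'' v v := by rw [hvsum]
    simp only [map_add, map_smul, smul_eq_mul, hA] at h5
    linarith [h5]
  have hL0 : (fderiv ℝ F p eb + 2 * fderiv ℝ F p ec * lam p) * L = 0 := by
    linear_combination hB - hcomb
  have hLzero : L = 0 := by
    rcases mul_eq_zero.mp hL0 with h | h
    · exact absurd h (by simpa [pd] using hnd)
    · exact h
  -- conclude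
  have hfin : fderiv ℝ lam p (ea + lam p • eb + lam p ^ 2 • ec) = L := by rw [hvsum]
  simp only [map_add, map_smul, smul_eq_mul, hLzero] at hfin
  simp only [pd]
  linarith [hfin]
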